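/- Let A, B be bounded linear operators on a complex Hilbert space H, K a nonempty set of unit vectors, ber(T)=sup_{k∈K}|⟨T k,k⟩|, ‖T‖_ber=sup_{k,l∈K}|⟨T k,l⟩|. Then ‖A B‖_ber ≤ ber(A A*)^{1/2} · ber(B*B)^{1/2}. -/

import Mathlib

open ContinuousLinearMap

noncomputable def berNum {H : Type*} [NormedAddCommGroup H] [InnerProductSpace ℂ H]
    (K : Set H) (T : H →L[ℂ] H) : ℝ :=
  sSup {x : ℝ | ∃ k ∈ K, x = ‖(inner ℂ (T k) k : ℂ)‖}

noncomputable def berNorm {H : Type*} [NormedAddCommGroup H] [InnerProductSpace ℂ H]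
    (K : Set H) (T : H →L[ℂ] H) : ℝ :=
  sSup {x : ℝ | ∃ k ∈ K, ∃ l ∈ K, x = ‖(inner ℂ (T k) l : ℂ)‖}

theorem berNorm_mul {H : Type*} [NormedAddCommGroup H] [InnerProductSpace ℂ H] [CompleteSpace H]
    (A B : H →L[ℂ] H) (K : Set H) (hK : K.Nonempty) (hK1 : ∀ k ∈ K, ‖k‖ = 1) :
    berNorm K (A * B)
      ≤ Real.sqrt (berNum K (A * adjoint A)) * Real.sqrt (berNum K (adjoint B * B)) := by
  have bdd : ∀ T : H →L[ℂ] H, BddAbove {x : ℝ | ∃ k ∈ K, x = ‖(inner ℂ (T k) k : ℂ)‖} := by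
    intro T
    refine ⟨‖T‖, ?_⟩
    rintro x ⟨k, hk, rfl⟩
    calc ‖(inner ℂ (T k) k : ℂ)‖ ≤ ‖T k‖ * ‖k‖ := norm_inner_le_norm _ _
      _ ≤ ‖T‖ * ‖k‖ * ‖k‖ := by gcongr; exact T.le_opNorm k
      _ = ‖T‖ := by rw [hK1 k hk]; ring
  have hB : ∀ k ∈ K, ‖B k‖ ^ 2 ≤ berNum K (adjoint B * B) := by
    intro k hk
    have h1 : (‖B k‖ : ℝ) ^ 2 = ‖(inner ℂ ((adjoint B * B) k) k : ℂ)‖ := by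
      rw [ContinuousLinearMap.mul_apply, adjoint_inner_left, inner_self_eq_norm_sq_to_K]
      simp
    rw [h1]
    exact le_csSup (bdd _) ⟨k, hk, rfl⟩
  have hA : ∀ l ∈ K, ‖adjoint A l‖ ^ 2 ≤ berNum K (A * adjoint A) := by
    intro l hl
    have h1 : (‖adjoint A l‖ : ℝ) ^ 2 = ‖(inner ℂ ((A * adjoint A) l) l : ℂ)‖ := by
      rw [ContinuousLinearMap.mul_apply, ← adjoint_inner_right, inner_self_eq_norm_sq_to_K]
      simp
    rw [h1]
    exact le_csSup (bdd _) ⟨l, hl, rfl⟩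
  apply Real.sSup_le
  · rintro x ⟨k, hk, l, hl, rfl⟩
    calc ‖(inner ℂ ((A * B) k) l : ℂ)‖ = ‖(inner ℂ (B k) (adjoint A l) : ℂ)‖ := by
          rw [ContinuousLinearMap.mul_apply, adjoint_inner_right]
      _ ≤ ‖B k‖ * ‖adjoint A l‖ := norm_inner_le_norm _ _
      _ ≤ Real.sqrt (berNum K (adjoint B * B)) * Real.sqrt (berNum K (A * adjoint A)) := by
          apply mul_le_mul
          · rw [← Real.sqrt_sq (norm_nonneg (B k))]
            exact Real.sqrt_le_sqrt (hB k hk)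
          · rw [← Real.sqrt_sq (norm_nonneg (adjoint A l))]
            exact Real.sqrt_le_sqrt (hA l hl)
          · exact norm_nonneg _
          · exact Real.sqrt_nonneg _
      _ = _ := mul_comm _ _
  · positivity
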